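/- Let H ∈ (1/2, 1) and for nonnegative integers n, m define ρ_{n,m} = ∫₀¹ ∫₀ᵗ s^n t^m (t−s)^{2H−2} ds dt. Then there exists a constant C_H > 0, depending only on H, such that for every integer n ≥ 1: ρ_{n,n} ≤ C_H · n^{−2H} and 0 ≤ ρ_{n,n} − ρ_{n+1,n} ≤ C_H · n^{−2H−1}. -/

import Mathlib

open MeasureTheory

/-- `ρ_{n,m} = ∫₀¹ ∫₀ᵗ s^n t^m (t−s)^{2H−2} ds dt`. -/
noncomputable def rhoNM (H : ℝ) (n m : ℕ) : ℝ :=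
  ∫ t in Set.Ioo (0 : ℝ) 1, ∫ s in Set.Ioo (0 : ℝ) t,
    s ^ n * t ^ m * (t - s) ^ (2 * H - 2)

open Set Real intervalIntegral in
/-- interval integrability of `u^n (1-u)^r` on `[0,1]` for `r > -1`. -/
lemma rho_aux_intInt {r : ℝ} (hr : -1 < r) (n : ℕ) :
    IntervalIntegrable (fun u : ℝ => u ^ n * (1 - u) ^ r) volume 0 1 := by
  have h1 : IntervalIntegrable (fun u : ℝ => (1 - u) ^ r) volume 0 1 := by
    have := (intervalIntegrable_rpow' (a := 0) (b := 1) hr).comp_sub_left 1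
    simpa using this.symm
  exact h1.continuousOn_mul (by fun_prop)

open Set Real intervalIntegral in
/-- Key bound: `∫₀¹ u^n (1-u)^{a-1} du ≤ Γ(a) n^{-a}` for `a > 0`, `n ≥ 1`. -/
lemma rho_aux_key {a : ℝ} (ha : 0 < a) (n : ℕ) (hn : 1 ≤ n) :
    ∫ u in (0:ℝ)..1, u ^ n * (1 - u) ^ (a - 1) ≤ Real.Gamma a * (n : ℝ) ^ (-a) := by
  have hN0 : (0:ℝ) < n := by exact_mod_cast Nat.lt_of_lt_of_le Nat.zero_lt_one hn
  have ha1 : (-1 : ℝ) < a - 1 := by linarith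
  have hbase : IntervalIntegrable (fun u : ℝ => (1 - u) ^ (a - 1)) volume 0 1 := by
    have := (intervalIntegrable_rpow' (a := 0) (b := 1) ha1).comp_sub_left 1
    simpa using this.symm
  -- step 1: pointwise bound by exponential
  have step1 : ∫ u in (0:ℝ)..1, u ^ n * (1 - u) ^ (a - 1)
      ≤ ∫ u in (0:ℝ)..1, Real.exp (-((n:ℝ) * (1 - u))) * (1 - u) ^ (a - 1) := by
    refine integral_mono_on (by norm_num) (rho_aux_intInt ha1 n)
      (hbase.continuousOn_mul (by fun_prop)) ?_
    intro u hu
    have hu0 : 0 ≤ u := hu.1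
    have hu1 : u ≤ 1 := hu.2
    have h1 : u ≤ Real.exp (u - 1) := by
      have := Real.add_one_le_exp (u - 1); linarith
    have h2 : u ^ n ≤ Real.exp (-((n:ℝ) * (1 - u))) := by
      calc u ^ n ≤ Real.exp (u - 1) ^ n := pow_le_pow_left₀ hu0 h1 n
        _ = Real.exp ((n:ℝ) * (u - 1)) := (Real.exp_nat_mul _ n).symm
        _ = Real.exp (-((n:ℝ) * (1 - u))) := by ring_nf
    have h3 : (0:ℝ) ≤ (1 - u) ^ (a - 1) := Real.rpow_nonneg (by linarith) _
    exact mul_le_mul_of_nonneg_right h2 h3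
  -- step 2: reflect
  have step2 : ∫ u in (0:ℝ)..1, Real.exp (-((n:ℝ) * (1 - u))) * (1 - u) ^ (a - 1)
      = ∫ v in (0:ℝ)..1, Real.exp (-((n:ℝ) * v)) * v ^ (a - 1) := by
    have := integral_comp_sub_left (a := 0) (b := 1)
      (fun v : ℝ => Real.exp (-((n:ℝ) * v)) * v ^ (a - 1)) 1
    simpa using this
  -- step 3: scale
  have step3 : ∫ v in (0:ℝ)..1, Real.exp (-((n:ℝ) * v)) * v ^ (a - 1)
      ≤ Real.Gamma a * (n : ℝ) ^ (-a) := by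
    have hcongr : ∫ v in (0:ℝ)..1, Real.exp (-((n:ℝ) * v)) * v ^ (a - 1)
        = ∫ v in (0:ℝ)..1, (n:ℝ) ^ (1 - a) *
            (Real.exp (-((n:ℝ) * v)) * ((n:ℝ) * v) ^ (a - 1)) := by
      refine integral_congr ?_
      intro v hv
      rw [Set.uIcc_of_le (by norm_num : (0:ℝ) ≤ 1)] at hv
      have hv0 : 0 ≤ v := hv.1
      dsimp only
      rw [Real.mul_rpow hN0.le hv0]
      rw [show (n:ℝ) ^ (1 - a) * (Real.exp (-((n:ℝ) * v)) * ((n:ℝ) ^ (a - 1) * v ^ (a - 1)))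
          = ((n:ℝ) ^ (1 - a) * (n:ℝ) ^ (a - 1)) * (Real.exp (-((n:ℝ) * v)) * v ^ (a - 1))
          by ring]
      rw [← Real.rpow_add hN0]
      norm_num
    rw [hcongr, intervalIntegral.integral_const_mul]
    have hscale : ∫ v in (0:ℝ)..1, Real.exp (-((n:ℝ) * v)) * ((n:ℝ) * v) ^ (a - 1)
        = ((n:ℝ))⁻¹ • ∫ w in (0:ℝ)..(n:ℝ), Real.exp (-w) * w ^ (a - 1) := by
      have := integral_comp_mul_left (a := 0) (b := 1)
        (fun w : ℝ => Real.exp (-w) * w ^ (a - 1)) (ne_of_gt hN0)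
      simpa using this
    rw [hscale]
    have htail : ∫ w in (0:ℝ)..(n:ℝ), Real.exp (-w) * w ^ (a - 1) ≤ Real.Gamma a := by
      rw [Real.Gamma_eq_integral ha, integral_of_le hN0.le]
      refine setIntegral_mono_set (Real.GammaIntegral_convergent ha) ?_ ?_
      · filter_upwards [ae_restrict_mem measurableSet_Ioi] with x hx
        exact mul_nonneg (Real.exp_pos _).le (Real.rpow_nonneg (le_of_lt hx) _)
      · exact Filter.Eventually.of_forall Set.Ioc_subset_Ioi_self
    have hGnonneg : (0:ℝ) ≤ ∫ w in (0:ℝ)..(n:ℝ), Real.exp (-w) * w ^ (a - 1) →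
        True := fun _ => trivial
    calc (n:ℝ) ^ (1 - a) * (((n:ℝ))⁻¹ • ∫ w in (0:ℝ)..(n:ℝ), Real.exp (-w) * w ^ (a - 1))
        ≤ (n:ℝ) ^ (1 - a) * (((n:ℝ))⁻¹ * Real.Gamma a) := by
          refine mul_le_mul_of_nonneg_left ?_ (Real.rpow_nonneg hN0.le _)
          simpa [smul_eq_mul] using
            mul_le_mul_of_nonneg_left htail (inv_nonneg.2 hN0.le)
      _ = Real.Gamma a * (n : ℝ) ^ (-a) := by
          rw [← Real.rpow_neg_one (n:ℝ),
            show (n:ℝ) ^ (1 - a) * ((n:ℝ) ^ (-1:ℝ) * Real.Gamma a)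
              = ((n:ℝ) ^ (1 - a) * (n:ℝ) ^ (-1:ℝ)) * Real.Gamma a by ring,
            ← Real.rpow_add hN0, show (1 - a) + (-1:ℝ) = -a by ring]
          ring
  calc ∫ u in (0:ℝ)..1, u ^ n * (1 - u) ^ (a - 1)
      ≤ ∫ u in (0:ℝ)..1, Real.exp (-((n:ℝ) * (1 - u))) * (1 - u) ^ (a - 1) := step1
    _ = _ := step2
    _ ≤ _ := step3

open Set Real intervalIntegral in
/-- Scaling: the inner integral. -/
lemma rho_aux_inner (H : ℝ) (hH : H ∈ Set.Ioo (1 / 2 : ℝ) 1) (n m : ℕ) {t : ℝ}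
    (ht : 0 < t) :
    (∫ s in Set.Ioo (0:ℝ) t, s ^ n * t ^ m * (t - s) ^ (2 * H - 2))
      = t ^ ((n:ℝ) + m + 2 * H - 1) * ∫ u in (0:ℝ)..1, u ^ n * (1 - u) ^ (2 * H - 2) := by
  have h1 : (∫ s in Set.Ioo (0:ℝ) t, s ^ n * t ^ m * (t - s) ^ (2 * H - 2))
      = ∫ s in (0:ℝ)..t, s ^ n * t ^ m * (t - s) ^ (2 * H - 2) := by
    rw [integral_of_le ht.le, integral_Ioc_eq_integral_Ioo]
  rw [h1]
  have h2 : ∫ s in (0:ℝ)..t, s ^ n * t ^ m * (t - s) ^ (2 * H - 2)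
      = t • ∫ u in (0:ℝ)..1, (t * u) ^ n * t ^ m * (t - t * u) ^ (2 * H - 2) := by
    have := integral_comp_mul_left (a := 0) (b := 1)
      (fun s : ℝ => s ^ n * t ^ m * (t - s) ^ (2 * H - 2)) (ne_of_gt ht)
    rw [this]
    simp only [mul_zero, mul_one, smul_eq_mul]
    rw [← mul_assoc, mul_inv_cancel₀ (ne_of_gt ht), one_mul]
  rw [h2]
  have h3 : ∫ u in (0:ℝ)..1, (t * u) ^ n * t ^ m * (t - t * u) ^ (2 * H - 2)
      = ∫ u in (0:ℝ)..1, t ^ ((n:ℝ) + m + 2 * H - 2) * (u ^ n * (1 - u) ^ (2 * H - 2)) := by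
    refine integral_congr ?_
    intro u hu
    rw [Set.uIcc_of_le (by norm_num : (0:ℝ) ≤ 1)] at hu
    have hu1 : 0 ≤ 1 - u := by linarith [hu.2]
    have e1 : t - t * u = t * (1 - u) := by ring
    dsimp only
    rw [e1, Real.mul_rpow ht.le hu1, mul_pow]
    rw [show t ^ n * u ^ n * t ^ m * (t ^ (2 * H - 2) * (1 - u) ^ (2 * H - 2))
        = (t ^ n * t ^ m * t ^ (2 * H - 2)) * (u ^ n * (1 - u) ^ (2 * H - 2)) by ring]
    congr 1
    rw [← Real.rpow_natCast t n, ← Real.rpow_natCast t m, ← Real.rpow_add ht,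
      ← Real.rpow_add ht]
    congr 1
    ring
  rw [h3, intervalIntegral.integral_const_mul, smul_eq_mul, ← mul_assoc]
  congr 1
  rw [show t * t ^ ((n:ℝ) + m + 2 * H - 2) = t ^ (1:ℝ) * t ^ ((n:ℝ) + m + 2 * H - 2) by
    rw [Real.rpow_one], ← Real.rpow_add ht]
  congr 1
  ring

open Set Real intervalIntegral in
/-- Exact value of `ρ_{n,m}`. -/
lemma rho_aux_eq (H : ℝ) (hH : H ∈ Set.Ioo (1 / 2 : ℝ) 1) (n m : ℕ) :
    rhoNM H n m
      = (∫ u in (0:ℝ)..1, u ^ n * (1 - u) ^ (2 * H - 2)) / ((n:ℝ) + m + 2 * H) := by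
  obtain ⟨hH1, hH2⟩ := hH
  have hp : (0:ℝ) < (n:ℝ) + m + 2 * H := by
    have : (0:ℝ) ≤ (n:ℝ) := Nat.cast_nonneg n
    have : (0:ℝ) ≤ (m:ℝ) := Nat.cast_nonneg m
    nlinarith [Nat.cast_nonneg (α := ℝ) n, Nat.cast_nonneg (α := ℝ) m]
  rw [rhoNM]
  rw [setIntegral_congr_fun measurableSet_Ioo
    (fun t ht => rho_aux_inner H ⟨hH1, hH2⟩ n m ht.1)]
  rw [MeasureTheory.integral_mul_const]
  have h4 : (∫ t in Set.Ioo (0:ℝ) 1, t ^ ((n:ℝ) + m + 2 * H - 1))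
      = 1 / ((n:ℝ) + m + 2 * H) := by
    rw [← integral_Ioc_eq_integral_Ioo, ← integral_of_le (by norm_num : (0:ℝ) ≤ 1)]
    rw [integral_rpow (Or.inl (by linarith : (-1:ℝ) < (n:ℝ) + ↑m + 2 * H - 1))]
    rw [show (n:ℝ) + ↑m + 2 * H - 1 + 1 = (n:ℝ) + ↑m + 2 * H by ring,
      Real.one_rpow, Real.zero_rpow (ne_of_gt hp)]
    norm_num
  rw [h4]
  ring

theorem rho_asymptotics (H : ℝ) (hH : H ∈ Set.Ioo (1 / 2 : ℝ) 1) :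
    ∃ C : ℝ, 0 < C ∧ ∀ n : ℕ, 1 ≤ n →
      rhoNM H n n ≤ C * (n : ℝ) ^ (-(2 * H)) ∧
      0 ≤ rhoNM H n n - rhoNM H (n + 1) n ∧
      rhoNM H n n - rhoNM H (n + 1) n ≤ C * (n : ℝ) ^ (-(2 * H) - 1) := by
  obtain ⟨hH1, hH2⟩ := hH
  have hHpos : (0:ℝ) < 2 * H - 1 := by linarith
  have h2H : (0:ℝ) < 2 * H := by linarith
  have hr2 : (-1:ℝ) < 2 * H - 2 := by linarith
  have hG1 : 0 < Real.Gamma (2 * H - 1) := Real.Gamma_pos_of_pos hHpos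
  have hG2 : 0 < Real.Gamma (2 * H) := Real.Gamma_pos_of_pos h2H
  refine ⟨Real.Gamma (2 * H - 1) + Real.Gamma (2 * H) + 1, by linarith, ?_⟩
  intro n hn
  set N : ℝ := (n : ℝ) with hNdef
  have hN1 : (1:ℝ) ≤ N := by rw [hNdef]; exact_mod_cast hn
  have hN0 : (0:ℝ) < N := by linarith
  set In : ℝ := ∫ u in (0:ℝ)..1, u ^ n * (1 - u) ^ (2 * H - 2) with hIn
  set In1 : ℝ := ∫ u in (0:ℝ)..1, u ^ (n + 1) * (1 - u) ^ (2 * H - 2) with hIn1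
  set Jn : ℝ := ∫ u in (0:ℝ)..1, u ^ n * (1 - u) ^ (2 * H - 1) with hJn
  have hInNN : 0 ≤ In := by
    refine intervalIntegral.integral_nonneg (by norm_num) (fun u hu => ?_)
    exact mul_nonneg (pow_nonneg hu.1 n) (Real.rpow_nonneg (by linarith [hu.2]) _)
  have hJnNN : 0 ≤ Jn := by
    refine intervalIntegral.integral_nonneg (by norm_num) (fun u hu => ?_)
    exact mul_nonneg (pow_nonneg hu.1 n) (Real.rpow_nonneg (by linarith [hu.2]) _)
  -- In = In1 + Jn
  have hsplit : In = In1 + Jn := by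
    rw [hIn, hIn1, hJn,
      ← intervalIntegral.integral_add (rho_aux_intInt hr2 (n + 1))
        (rho_aux_intInt (by linarith) n)]
    refine intervalIntegral.integral_congr ?_
    intro u hu
    rw [Set.uIcc_of_le (by norm_num : (0:ℝ) ≤ 1)] at hu
    dsimp only
    rcases eq_or_lt_of_le hu.2 with h1 | h1
    · simp [h1, Real.zero_rpow (by linarith : 2 * H - 2 ≠ 0),
        Real.zero_rpow (by linarith : 2 * H - 1 ≠ 0)]
    · have hpos : 0 < 1 - u := by linarith
      have e : (1 - u) ^ (2 * H - 1) = (1 - u) ^ (2 * H - 2) * (1 - u) := by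
        rw [show 2 * H - 1 = (2 * H - 2) + 1 by ring, Real.rpow_add hpos,
          Real.rpow_one]
      rw [e, pow_succ]
      ring
  -- key bounds
  have hInB : In ≤ Real.Gamma (2 * H - 1) * N ^ (-(2 * H - 1)) := by
    have := rho_aux_key hHpos n hn
    rw [show 2 * H - 1 - 1 = 2 * H - 2 by ring] at this
    exact this
  have hJnB : Jn ≤ Real.Gamma (2 * H) * N ^ (-(2 * H)) := by
    have := rho_aux_key h2H n hn
    rw [show 2 * H - 1 = 2 * H - 1 by ring] at this
    exact this
  -- exact values of rho
  have hrho1 : rhoNM H n n = In / (N + N + 2 * H) := rho_aux_eq H ⟨hH1, hH2⟩ n n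
  have hrho2 : rhoNM H (n + 1) n = In1 / (N + 1 + N + 2 * H) := by
    have := rho_aux_eq H ⟨hH1, hH2⟩ (n + 1) n
    rw [this, ← hIn1, hNdef]
    push_cast
    ring
  have hD1 : (0:ℝ) < N + N + 2 * H := by linarith
  have hD2 : (0:ℝ) < N + 1 + N + 2 * H := by linarith
  -- difference formula
  have hdiff : rhoNM H n n - rhoNM H (n + 1) n
      = In / ((N + N + 2 * H) * (N + 1 + N + 2 * H)) + Jn / (N + 1 + N + 2 * H) := by
    rw [hrho1, hrho2, show In1 = In - Jn by linarith [hsplit]]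
    field_simp
    ring
  -- rpow arithmetic helpers
  have e1 : N ^ (-(2 * H)) = N ^ (-(2 * H - 1)) / N := by
    rw [div_eq_mul_inv, ← Real.rpow_neg_one N, ← Real.rpow_add hN0]
    congr 1; ring
  have e2 : N ^ (-(2 * H) - 1) = N ^ (-(2 * H - 1)) / (N * N) := by
    rw [div_eq_mul_inv, mul_inv, ← Real.rpow_neg_one N, ← mul_assoc,
      ← Real.rpow_add hN0, ← Real.rpow_add hN0]
    congr 1; ring
  have e3 : N ^ (-(2 * H) - 1) = N ^ (-(2 * H)) / N := by
    rw [div_eq_mul_inv, ← Real.rpow_neg_one N, ← Real.rpow_add hN0, sub_eq_add_neg]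
  have hpow1 : (0:ℝ) < N ^ (-(2 * H - 1)) := Real.rpow_pos_of_pos hN0 _
  have hpow2 : (0:ℝ) < N ^ (-(2 * H)) := Real.rpow_pos_of_pos hN0 _
  have hpow3 : (0:ℝ) < N ^ (-(2 * H) - 1) := Real.rpow_pos_of_pos hN0 _
  refine ⟨?_, ?_, ?_⟩
  · -- first bound
    rw [hrho1]
    calc In / (N + N + 2 * H)
        ≤ (Real.Gamma (2 * H - 1) * N ^ (-(2 * H - 1))) / N := by
          refine div_le_div₀ (by positivity) hInB hN0 (by linarith)
      _ = Real.Gamma (2 * H - 1) * N ^ (-(2 * H)) := by rw [e1]; ring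
      _ ≤ (Real.Gamma (2 * H - 1) + Real.Gamma (2 * H) + 1) * N ^ (-(2 * H)) := by
          have := mul_le_mul_of_nonneg_right
            (by linarith : Real.Gamma (2 * H - 1)
              ≤ Real.Gamma (2 * H - 1) + Real.Gamma (2 * H) + 1) hpow2.le
          linarith
  · rw [hdiff]
    positivity
  · rw [hdiff]
    have b1 : In / ((N + N + 2 * H) * (N + 1 + N + 2 * H))
        ≤ Real.Gamma (2 * H - 1) * N ^ (-(2 * H) - 1) := by
      calc In / ((N + N + 2 * H) * (N + 1 + N + 2 * H))
          ≤ (Real.Gamma (2 * H - 1) * N ^ (-(2 * H - 1))) / (N * N) := by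
            refine div_le_div₀ (by positivity) hInB (by positivity) ?_
            have hA : N ≤ N + N + 2 * H := by linarith
            have hB : N ≤ N + 1 + N + 2 * H := by linarith
            exact mul_le_mul hA hB hN0.le (by linarith)
        _ = Real.Gamma (2 * H - 1) * N ^ (-(2 * H) - 1) := by rw [e2]; ring
    have b2 : Jn / (N + 1 + N + 2 * H) ≤ Real.Gamma (2 * H) * N ^ (-(2 * H) - 1) := by
      calc Jn / (N + 1 + N + 2 * H)
          ≤ (Real.Gamma (2 * H) * N ^ (-(2 * H))) / N := by
            refine div_le_div₀ (by positivity) hJnB hN0 (by linarith)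
        _ = Real.Gamma (2 * H) * N ^ (-(2 * H) - 1) := by rw [e3]; ring
    have hsum := add_le_add b1 b2
    have := mul_le_mul_of_nonneg_right
      (by linarith : Real.Gamma (2 * H - 1) + Real.Gamma (2 * H)
        ≤ Real.Gamma (2 * H - 1) + Real.Gamma (2 * H) + 1) hpow3.le
    linarith
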